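/- (Cayley's formula) The number of spanning trees of the complete graph K_n on n labeled vertices is n^(n−2), for n ≥ 1 (with the convention n^(n−2) interpreted as 1 for n = 1 and n = 2). -/

import Mathlib

open Function

namespace Cayley

set_option linter.unusedSectionVars false

variable {V : Type*} [Fintype V] [DecidableEq V]

/-- `x` is a periodic point of `f`. -/
def IsPer (f : V → V) (x : V) : Prop := ∃ k, 0 < k ∧ f^[k] x = x

lemma isPer_apply {f : V → V} {x : V} (h : IsPer f x) : IsPer f (f x) := by
  obtain ⟨k, hk, hx⟩ := h
  exact ⟨k, hk, by rw [← Function.iterate_succ_apply, Function.iterate_succ_apply', hx]⟩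

lemma IsPer.iterate_mul {f : V → V} {x : V} (h : IsPer f x) :
    ∀ c, ∃ k, c ≤ k ∧ f^[k] x = x := by
  obtain ⟨k, hk, hx⟩ := h
  intro c
  refine ⟨k * c, Nat.le_mul_of_pos_left c hk, ?_⟩
  rw [Function.iterate_mul]
  exact Function.iterate_fixed hx c

/-- A periodic point which eventually reaches a fixed point `r` equals `r`. -/
lemma isPer_eq_of_reaches {f : V → V} {x r : V} (h : IsPer f x) {m : ℕ}
    (hm : f^[m] x = r) (hr : f r = r) : x = r := by
  obtain ⟨k, hk, hx⟩ := h.iterate_mul m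
  calc x = f^[k] x := hx.symm
    _ = f^[k - m] (f^[m] x) := by rw [← Function.iterate_add_apply, Nat.sub_add_cancel hk]
    _ = r := by rw [hm]; exact Function.iterate_fixed hr _

lemma isPer_injOn {f : V → V} {a b : V} (ha : IsPer f a) (hb : IsPer f b)
    (h : f a = f b) : a = b := by
  obtain ⟨k, hk, hka⟩ := ha
  obtain ⟨l, hl, hlb⟩ := hb
  have h1 : f^[k * l] a = a := by rw [Function.iterate_mul]; exact Function.iterate_fixed hka l
  have h2 : f^[k * l] b = b := by
    rw [mul_comm, Function.iterate_mul]; exact Function.iterate_fixed hlb k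
  have hpos : 0 < k * l := Nat.mul_pos hk hl
  obtain ⟨m, e⟩ : ∃ m, k * l = m + 1 := ⟨k * l - 1, by omega⟩
  rw [e] at h1 h2
  calc a = f^[m + 1] a := h1.symm
    _ = f^[m] (f a) := Function.iterate_succ_apply f m a
    _ = f^[m] (f b) := by rw [h]
    _ = f^[m + 1] b := (Function.iterate_succ_apply f m b).symm
    _ = b := h2

/-- Over a finite type, every orbit reaches a periodic point. -/
lemma exists_iterate_isPer (f : V → V) (x : V) : ∃ j, IsPer f (f^[j] x) := by
  obtain ⟨i, j, hij, h⟩ := Finite.exists_ne_map_eq_of_infinite (fun k : ℕ => f^[k] x)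
  rcases hij.lt_or_gt with hlt | hlt
  · refine ⟨i, j - i, by omega, ?_⟩
    rw [← Function.iterate_add_apply, Nat.sub_add_cancel hlt.le, ← h]
  · refine ⟨j, i - j, by omega, ?_⟩
    rw [← Function.iterate_add_apply, Nat.sub_add_cancel hlt.le, h]

/-- If a finite set is closed under `f` and `f` is injective on it, all its points
are periodic. -/
lemma isPer_of_mem_closed {f : V → V} {S : Finset V} (hc : ∀ x ∈ S, f x ∈ S)
    (hi : ∀ x ∈ S, ∀ y ∈ S, f x = f y → x = y) {x : V} (hx : x ∈ S) : IsPer f x := by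
  have hmem : ∀ k, f^[k] x ∈ S := by
    intro k
    induction k with
    | zero => exact hx
    | succ k ih => rw [Function.iterate_succ_apply']; exact hc _ ih
  obtain ⟨i, j, hij, h⟩ := Finite.exists_ne_map_eq_of_infinite (fun k : ℕ => f^[k] x)
  wlog hlt : i < j generalizing i j
  · exact this j i hij.symm h.symm (by omega)
  have key : ∀ t, t ≤ i → f^[i - t] x = f^[j - t] x := by
    intro t
    induction t with
    | zero => intro _; simpa using h
    | succ t ih =>
      intro ht
      have h' := ih (by omega)
      have e1 : i - t = (i - (t+1)) + 1 := by omega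
      have e2 : j - t = (j - (t+1)) + 1 := by omega
      rw [e1, e2, Function.iterate_succ_apply', Function.iterate_succ_apply'] at h'
      exact hi _ (hmem _) _ (hmem _) h'
  have h0 := key i le_rfl
  simp only [Nat.sub_self, Function.iterate_zero_apply] at h0
  exact ⟨j - i, by omega, h0.symm⟩

/-- If `g` agrees with `f` outside `S` and the first `k` `f`-iterates of `x` avoid `S`,
then the iterates agree. -/
lemma iterate_eq_of_agree {f g : V → V} {S : Set V} (hfg : ∀ x ∉ S, g x = f x) :
    ∀ (k : ℕ) (x : V), (∀ i < k, f^[i] x ∉ S) → g^[k] x = f^[k] x := by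
  intro k
  induction k with
  | zero => intro x _; rfl
  | succ k ih =>
    intro x hx
    rw [Function.iterate_succ_apply, Function.iterate_succ_apply]
    rw [hfg x (by simpa using hx 0 (Nat.succ_pos _))]
    exact ih (f x) fun i hi => by
      rw [← Function.iterate_succ_apply]
      exact hx (i + 1) (by omega)

/-- If `g` agrees with `f` outside `S` and the `f`-orbit of `x` enters `S`,
so does the `g`-orbit (at the same first-entry point). -/
lemma exists_iterate_mem_of_agree {f g : V → V} {S : Set V} (hfg : ∀ x ∉ S, g x = f x)
    {x : V} (h : ∃ k, f^[k] x ∈ S) : ∃ k, g^[k] x ∈ S := by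
  classical
  obtain ⟨k, hk, hmin⟩ := Nat.lt_wfRel.wf.has_min {k | f^[k] x ∈ S} h
  refine ⟨k, ?_⟩
  rw [iterate_eq_of_agree hfg k x fun i hi hiS => hmin i hiS hi]
  exact hk

lemma isPer_iterate {f : V → V} {x : V} (h : IsPer f x) (j : ℕ) : IsPer f (f^[j] x) := by
  induction j with
  | zero => exact h
  | succ j ih => rw [Function.iterate_succ_apply']; exact isPer_apply ih

lemma iterate_mem_closed {f : V → V} {S : Set V} (hc : ∀ x ∈ S, f x ∈ S) :
    ∀ (k : ℕ) {x : V}, x ∈ S → f^[k] x ∈ S := by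
  intro k
  induction k with
  | zero => intro x hx; exact hx
  | succ k ih => intro x hx; rw [Function.iterate_succ_apply']; exact hc _ (ih hx)

lemma iterate_eq_on_closed {f g : V → V} {S : Set V} (h : ∀ x ∈ S, g x = f x)
    (hc : ∀ x ∈ S, f x ∈ S) : ∀ (k : ℕ) {x : V}, x ∈ S → g^[k] x = f^[k] x := by
  intro k
  induction k with
  | zero => intro x _; rfl
  | succ k ih =>
    intro x hx
    rw [Function.iterate_succ_apply, Function.iterate_succ_apply, h x hx]
    exact ih (hc x hx)

/-! ### Successor along a list -/

/-- The element following `y` in the list `M` (or `y` itself if `y` is last or absent). -/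
def nxt (M : List V) (y : V) : V := M.getD (M.idxOf y + 1) y

lemma nxt_getElem {M : List V} (hM : M.Nodup) {i : ℕ} (h1 : i + 1 < M.length)
    (h0 : i < M.length) : nxt M M[i] = M[i + 1] := by
  rw [nxt, List.Nodup.idxOf_getElem hM i h0, List.getD_eq_getElem _ _ h1]

lemma nxt_getLast {M : List V} (hM : M.Nodup) (h : M ≠ []) :
    nxt M (M.getLast h) = M.getLast h := by
  have hpos : 0 < M.length := List.length_pos_iff.mpr h
  have hl : M.length - 1 < M.length := by omega
  rw [List.getLast_eq_getElem, nxt, List.Nodup.idxOf_getElem hM _ hl, List.getD_eq_default]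
  omega

lemma nxt_mem {M : List V} {y : V} (hy : y ∈ M) : nxt M y ∈ M := by
  rw [nxt]
  rcases lt_or_ge (M.idxOf y + 1) M.length with h | h
  · rw [List.getD_eq_getElem _ _ h]; exact List.getElem_mem _
  · rw [List.getD_eq_default _ _ h]; exact hy

lemma nxt_iterate_getElem {M : List V} (hM : M.Nodup) :
    ∀ (k i : ℕ) (h : i + k < M.length), (nxt M)^[k] M[i] = M[i + k] := by
  intro k
  induction k with
  | zero => intro i h; simp
  | succ k ih =>
    intro i h
    rw [Function.iterate_succ_apply, nxt_getElem hM (by omega) (by omega),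
      ih (i + 1) (by omega)]
    congr 1
    omega

lemma nxt_iterate_getLast {M : List V} (hM : M.Nodup) (hne : M ≠ []) {i : ℕ}
    (h : i < M.length) : (nxt M)^[M.length - 1 - i] M[i] = M.getLast hne := by
  rw [List.getLast_eq_getElem, nxt_iterate_getElem hM _ i (by omega)]
  congr 2
  omega

/-! ### The Joyal bijection -/

/-- A pair `(p, r)` is a rooted-tree function if `r` is a fixed point of `p` reached by
iterating `p` from any vertex. -/
def IsRTF (p : V → V) (r : V) : Prop := p r = r ∧ ∀ v, ∃ k, p^[k] v = r

section LO

variable [LinearOrder V]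

/-- The periodic points of `f`, as a finset. -/
noncomputable def perF (f : V → V) : Finset V := (Set.toFinite {x | IsPer f x}).toFinset

lemma mem_perF {f : V → V} {x : V} : x ∈ perF f ↔ IsPer f x := Set.Finite.mem_toFinset _

/-- The sorted list of periodic points. -/
noncomputable def sC (f : V → V) : List V := (perF f).sort (· ≤ ·)

/-- The spine list: image of the sorted periodic points under `f`. -/
noncomputable def sL (f : V → V) : List V := (sC f).map f

lemma sC_nodup (f : V → V) : (sC f).Nodup := Finset.sort_nodup _ _

lemma mem_sC {f : V → V} {x : V} : x ∈ sC f ↔ IsPer f x := by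
  rw [sC, Finset.mem_sort, mem_perF]

lemma sL_nodup (f : V → V) : (sL f).Nodup :=
  (sC_nodup f).map_on fun a ha b hb hab =>
    isPer_injOn (mem_sC.mp ha) (mem_sC.mp hb) hab

lemma mem_sL {f : V → V} {y : V} : y ∈ sL f ↔ IsPer f y := by
  constructor
  · rintro hy
    obtain ⟨x, hx, rfl⟩ := List.mem_map.mp hy
    exact isPer_apply (mem_sC.mp hx)
  · intro hy
    obtain ⟨k, hk, hky⟩ := hy
    refine List.mem_map.mpr ⟨f^[k - 1] y, mem_sC.mpr (isPer_iterate ⟨k, hk, hky⟩ _), ?_⟩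
    have h1 : k - 1 + 1 = k := by omega
    calc f (f^[k - 1] y) = f^[k - 1 + 1] y := (Function.iterate_succ_apply' f (k - 1) y).symm
      _ = y := by rw [h1, hky]

lemma sL_length_pos [Nonempty V] (f : V → V) : 0 < (sL f).length := by
  obtain ⟨j, hj⟩ := exists_iterate_isPer f (Classical.arbitrary V)
  exact List.length_pos_iff.mpr (List.ne_nil_of_mem (mem_sL.mpr hj))

lemma sL_ne_nil [Nonempty V] (f : V → V) : sL f ≠ [] :=
  List.ne_nil_of_length_pos (sL_length_pos f)

variable [Nonempty V]

/-- The root produced by the Joyal map. -/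
noncomputable def joyalRoot (f : V → V) : V := (sL f).getLast (sL_ne_nil f)

/-- The marked vertex produced by the Joyal map. -/
noncomputable def joyalA (f : V → V) : V := (sL f).head (sL_ne_nil f)

open scoped Classical in
/-- The rooted-tree function produced by the Joyal map. -/
noncomputable def joyalP (f : V → V) : V → V :=
  fun x => if IsPer f x then nxt (sL f) x else f x

lemma joyalP_of_per {f : V → V} {x : V} (h : IsPer f x) : joyalP f x = nxt (sL f) x := by
  rw [joyalP, if_pos h]

lemma joyalP_of_not_per {f : V → V} {x : V} (h : ¬ IsPer f x) : joyalP f x = f x := by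
  rw [joyalP, if_neg h]

lemma joyalRoot_mem_sL (f : V → V) : joyalRoot f ∈ sL f := List.getLast_mem _

lemma joyalP_joyalRoot (f : V → V) : joyalP f (joyalRoot f) = joyalRoot f := by
  rw [joyalP_of_per (mem_sL.mp (joyalRoot_mem_sL f)), joyalRoot,
    nxt_getLast (sL_nodup f) (sL_ne_nil f)]

lemma joyalP_iterate_of_per {f : V → V} {x : V} (hx : IsPer f x) :
    ∃ k, (joyalP f)^[k] x = joyalRoot f := by
  have hxm : x ∈ sL f := mem_sL.mpr hx
  obtain ⟨i, hi, rfl⟩ := List.getElem_of_mem hxm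
  refine ⟨(sL f).length - 1 - i, ?_⟩
  have agree : ∀ y ∈ {y : V | IsPer f y}, joyalP f y = nxt (sL f) y := fun y hy =>
    joyalP_of_per hy
  have closed : ∀ y ∈ {y : V | IsPer f y}, nxt (sL f) y ∈ {y : V | IsPer f y} := fun y hy =>
    mem_sL.mp (nxt_mem (mem_sL.mpr hy))
  rw [iterate_eq_on_closed agree closed _ (by exact mem_sL.mp hxm)]
  exact nxt_iterate_getLast (sL_nodup f) (sL_ne_nil f) hi

lemma isRTF_joyal (f : V → V) : IsRTF (joyalP f) (joyalRoot f) := by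
  refine ⟨joyalP_joyalRoot f, fun v => ?_⟩
  by_cases hv : IsPer f v
  · exact joyalP_iterate_of_per hv
  · obtain ⟨j, hj⟩ := exists_iterate_isPer f v
    have agree : ∀ x ∉ {y : V | IsPer f y}, joyalP f x = f x := fun x hx =>
      joyalP_of_not_per hx
    obtain ⟨k, hk⟩ := exists_iterate_mem_of_agree agree ⟨j, hj⟩
    obtain ⟨k', hk'⟩ := joyalP_iterate_of_per hk
    exact ⟨k' + k, by rw [Function.iterate_add_apply, hk']⟩

/-! ### The inverse Joyal map -/

variable (p : V → V) (r a : V) (h : ∃ k, p^[k] a = r)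

/-- Number of steps from the marked vertex to the root. -/
noncomputable def sd : ℕ := Nat.find h

/-- The spine: the orbit of the marked vertex up to the root. -/
noncomputable def spine : List V := (List.range (sd p r a h + 1)).map (fun k => p^[k] a)

lemma spine_length : (spine p r a h).length = sd p r a h + 1 := by simp [spine]

lemma spine_ne_nil : spine p r a h ≠ [] :=
  List.ne_nil_of_length_pos (by rw [spine_length]; omega)

lemma spine_getElem {i : ℕ} (hi : i < (spine p r a h).length) :
    (spine p r a h)[i] = p^[i] a := by
  simp only [spine, List.getElem_map, List.getElem_range]

lemma spine_head : (spine p r a h).head (spine_ne_nil p r a h) = a := by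
  have hl := spine_length p r a h
  rw [List.head_eq_getElem, spine_getElem p r a h (by omega), Function.iterate_zero_apply]

lemma spine_getLast : (spine p r a h).getLast (spine_ne_nil p r a h) = r := by
  have hl := spine_length p r a h
  rw [List.getLast_eq_getElem, spine_getElem p r a h (by omega), hl]
  simpa [sd] using Nat.find_spec h

variable (hpr : p r = r)

include hpr in
lemma spine_nodup : (spine p r a h).Nodup := by
  rw [spine]
  refine List.nodup_range.map_on ?_
  have key : ∀ i j, i < j → j < sd p r a h + 1 → p^[i] a ≠ p^[j] a := by
    intro i j hlt hj hij
    have hper : IsPer p (p^[i] a) :=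
      ⟨j - i, by omega, by rw [← Function.iterate_add_apply, Nat.sub_add_cancel hlt.le, ← hij]⟩
    have hreach : p^[sd p r a h - i] (p^[i] a) = r := by
      rw [← Function.iterate_add_apply, Nat.sub_add_cancel (by omega)]
      exact Nat.find_spec h
    have := isPer_eq_of_reaches hper hreach hpr
    exact Nat.find_min h (show i < sd p r a h by omega) this
  intro i hi j hj hij
  simp only [List.mem_range] at hi hj
  rcases lt_trichotomy i j with hlt | heq | hlt
  · exact absurd hij (key i j hlt hj)
  · exact heq
  · exact absurd hij.symm (key j i hlt hi)

lemma mem_spine_iff {x : V} : x ∈ spine p r a h ↔ ∃ i ≤ sd p r a h, p^[i] a = x := by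
  have hl := spine_length p r a h
  constructor
  · intro hx
    obtain ⟨i, hi, rfl⟩ := List.getElem_of_mem hx
    exact ⟨i, by omega, (spine_getElem p r a h hi).symm⟩
  · rintro ⟨i, hi, rfl⟩
    rw [← spine_getElem p r a h (show i < (spine p r a h).length by omega)]
    exact List.getElem_mem _

include hpr in
lemma spine_closed {x : V} (hx : x ∈ spine p r a h) : p x ∈ spine p r a h := by
  rw [mem_spine_iff] at hx ⊢
  obtain ⟨i, hi, rfl⟩ := hx
  rcases eq_or_lt_of_le hi with heq | hlt
  · have hr : p^[i] a = r := by rw [heq]; exact Nat.find_spec h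
    exact ⟨i, hi, by rw [hr, hpr]⟩
  · exact ⟨i + 1, by omega, Function.iterate_succ_apply' p i a⟩

/-- The sorted list of spine elements. -/
noncomputable def sS : List V := (spine p r a h).toFinset.sort (· ≤ ·)

open scoped Classical in
/-- The inverse Joyal map. -/
noncomputable def joyalInv : V → V :=
  fun x => if x ∈ spine p r a h
    then (spine p r a h).getD ((sS p r a h).idxOf x) x else p x

include hpr in
lemma sS_length : (sS p r a h).length = (spine p r a h).length := by
  rw [sS, Finset.length_sort, List.toFinset_card_of_nodup (spine_nodup p r a h hpr)]

lemma mem_sS_iff {x : V} : x ∈ sS p r a h ↔ x ∈ spine p r a h := by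
  rw [sS, Finset.mem_sort, List.mem_toFinset]

lemma sS_nodup : (sS p r a h).Nodup := Finset.sort_nodup _ _

include hpr in
lemma joyalInv_of_mem {x : V} (hx : x ∈ spine p r a h) :
    joyalInv p r a h x = (spine p r a h)[(sS p r a h).idxOf x]'(by
      rw [← sS_length p r a h hpr]
      exact List.idxOf_lt_length_iff.mpr ((mem_sS_iff p r a h).mpr hx)) := by
  rw [joyalInv, if_pos hx, List.getD_eq_getElem]

lemma joyalInv_of_not_mem {x : V} (hx : x ∉ spine p r a h) :
    joyalInv p r a h x = p x := by
  rw [joyalInv, if_neg hx]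

/-! ### Roundtrips -/

lemma getLast_congr {l₁ l₂ : List V} (h : l₁ = l₂) (h₁ : l₁ ≠ []) :
    l₁.getLast h₁ = l₂.getLast (h ▸ h₁) := by subst h; rfl

lemma head_congr {l₁ l₂ : List V} (h : l₁ = l₂) (h₁ : l₁ ≠ []) :
    l₁.head h₁ = l₂.head (h ▸ h₁) := by subst h; rfl

lemma getElem_idx_congr {l : List V} {i j : ℕ} (h : i = j) (hi : i < l.length) :
    l[i]'hi = l[j]'(h ▸ hi) := by subst h; rfl

lemma joyalP_iterate_a (f : V → V) {k : ℕ} (hk : k < (sL f).length) :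
    (joyalP f)^[k] (joyalA f) = (sL f)[k] := by
  have ha : joyalA f = (sL f)[0]'(sL_length_pos f) := by
    rw [joyalA, List.head_eq_getElem]
  rw [ha, iterate_eq_on_closed (S := {y : V | IsPer f y}) (fun y hy => joyalP_of_per hy)
    (fun y hy => mem_sL.mp (nxt_mem (mem_sL.mpr hy))) k (mem_sL.mp (List.getElem_mem _)),
    nxt_iterate_getElem (sL_nodup f) k 0 (by omega)]
  exact getElem_idx_congr (by omega) _

lemma joyal_sd (f : V → V) :
    sd (joyalP f) (joyalRoot f) (joyalA f) ((isRTF_joyal f).2 _) = (sL f).length - 1 := by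
  have hlen := sL_length_pos f
  rw [sd, Nat.find_eq_iff]
  constructor
  · rw [joyalP_iterate_a f (by omega), joyalRoot, List.getLast_eq_getElem]
  · intro k hk hcon
    rw [joyalP_iterate_a f (by omega), joyalRoot, List.getLast_eq_getElem] at hcon
    rw [(sL_nodup f).getElem_inj_iff] at hcon
    omega

lemma joyal_spine (f : V → V) :
    spine (joyalP f) (joyalRoot f) (joyalA f) ((isRTF_joyal f).2 _) = sL f := by
  have hlen := sL_length_pos f
  have hl : (spine (joyalP f) (joyalRoot f) (joyalA f) ((isRTF_joyal f).2 _)).length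
      = (sL f).length := by
    rw [spine_length, joyal_sd]; omega
  refine List.ext_getElem hl ?_
  intro i h1 h2
  rw [spine_getElem _ _ _ _ h1, joyalP_iterate_a f h2]

lemma toFinset_sL (f : V → V) : (sL f).toFinset = perF f := by
  ext x
  rw [List.mem_toFinset, mem_sL, mem_perF]

lemma joyal_sS (f : V → V) :
    sS (joyalP f) (joyalRoot f) (joyalA f) ((isRTF_joyal f).2 _) = sC f := by
  rw [sS, joyal_spine, toFinset_sL, sC]

lemma joyal_left_inv (f : V → V) :
    joyalInv (joyalP f) (joyalRoot f) (joyalA f) ((isRTF_joyal f).2 _) = f := by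
  funext x
  by_cases hx : IsPer f x
  · have hxs : x ∈ spine (joyalP f) (joyalRoot f) (joyalA f) ((isRTF_joyal f).2 _) := by
      rw [joyal_spine]; exact mem_sL.mpr hx
    rw [joyalInv_of_mem _ _ _ _ (joyalP_joyalRoot f) hxs]
    have hxc : x ∈ sC f := mem_sC.mpr hx
    have hidx : (sC f).idxOf x < (sC f).length := List.idxOf_lt_length_iff.mpr hxc
    have hidx' : (sC f).idxOf x < (sL f).length := by
      rwa [sL, List.length_map]
    simp only [joyal_spine, joyal_sS]
    have : (sL f)[(sC f).idxOf x]'hidx' = f ((sC f)[(sC f).idxOf x]'hidx) := by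
      simp [sL]
    rw [this, List.getElem_idxOf hidx]
  · have hxs : x ∉ spine (joyalP f) (joyalRoot f) (joyalA f) ((isRTF_joyal f).2 _) := by
      rw [joyal_spine]; exact fun hc => hx (mem_sL.mp hc)
    rw [joyalInv_of_not_mem _ _ _ _ hxs, joyalP_of_not_per hx]

section RightInv

variable {p : V → V} {r a : V} (hrtf : IsRTF p r)

include hrtf

lemma joyalInv_maps_spine {x : V} (hx : x ∈ spine p r a (hrtf.2 a)) :
    joyalInv p r a (hrtf.2 a) x ∈ spine p r a (hrtf.2 a) := by
  rw [joyalInv_of_mem _ _ _ _ hrtf.1 hx]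
  exact List.getElem_mem _

lemma joyalInv_isPer_of_mem {x : V} (hx : x ∈ spine p r a (hrtf.2 a)) :
    IsPer (joyalInv p r a (hrtf.2 a)) x := by
  set f := joyalInv p r a (hrtf.2 a) with hf
  refine isPer_of_mem_closed (S := (spine p r a (hrtf.2 a)).toFinset) ?_ ?_
    (List.mem_toFinset.mpr hx)
  · intro y hy
    exact List.mem_toFinset.mpr (joyalInv_maps_spine hrtf (List.mem_toFinset.mp hy))
  · intro y hy z hz hyz
    rw [List.mem_toFinset] at hy hz
    rw [hf, joyalInv_of_mem _ _ _ _ hrtf.1 hy, joyalInv_of_mem _ _ _ _ hrtf.1 hz] at hyz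
    rw [(spine_nodup _ _ _ _ hrtf.1).getElem_inj_iff] at hyz
    exact (List.idxOf_inj ((mem_sS_iff _ _ _ _).mpr hy)
      ).mp hyz

lemma r_mem_spine : r ∈ spine p r a (hrtf.2 a) := by
  rw [mem_spine_iff]
  exact ⟨sd p r a (hrtf.2 a), le_rfl, Nat.find_spec (hrtf.2 a)⟩

lemma joyalInv_not_isPer_of_not_mem {x : V} (hx : x ∉ spine p r a (hrtf.2 a)) :
    ¬ IsPer (joyalInv p r a (hrtf.2 a)) x := by
  intro hper
  set f := joyalInv p r a (hrtf.2 a) with hf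
  set S : Set V := {y | y ∈ spine p r a (hrtf.2 a)} with hS
  have agree : ∀ y ∉ S, f y = p y := fun y hy => joyalInv_of_not_mem _ _ _ _ hy
  have hreach : ∃ k, p^[k] x ∈ S := by
    obtain ⟨k, hk⟩ := hrtf.2 x
    exact ⟨k, by rw [hk]; exact r_mem_spine hrtf⟩
  obtain ⟨k, hk⟩ := exists_iterate_mem_of_agree agree hreach
  obtain ⟨K, hK1, hK2⟩ := hper.iterate_mul k
  have hclosed : ∀ y ∈ S, f y ∈ S := fun y hy => joyalInv_maps_spine hrtf hy
  have : x ∈ S := by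
    rw [← hK2, show K = (K - k) + k by omega, Function.iterate_add_apply]
    exact iterate_mem_closed hclosed _ hk
  exact hx this

lemma joyal_perF : perF (joyalInv p r a (hrtf.2 a)) = (spine p r a (hrtf.2 a)).toFinset := by
  ext x
  rw [mem_perF, List.mem_toFinset]
  constructor
  · intro hper
    by_contra hx
    exact joyalInv_not_isPer_of_not_mem hrtf hx hper
  · exact joyalInv_isPer_of_mem hrtf

lemma joyal_sC : sC (joyalInv p r a (hrtf.2 a)) = sS p r a (hrtf.2 a) := by
  rw [sC, joyal_perF hrtf, sS]

lemma joyal_sL : sL (joyalInv p r a (hrtf.2 a)) = spine p r a (hrtf.2 a) := by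
  have hunf : sL (joyalInv p r a (hrtf.2 a))
      = List.map (joyalInv p r a (hrtf.2 a)) (sS p r a (hrtf.2 a)) := by
    rw [sL, joyal_sC hrtf]
  rw [hunf]
  have hlen : (List.map (joyalInv p r a (hrtf.2 a)) (sS p r a (hrtf.2 a))).length
      = (spine p r a (hrtf.2 a)).length := by
    rw [List.length_map, sS_length _ _ _ _ hrtf.1]
  refine List.ext_getElem hlen ?_
  intro i h1 h2
  have h1' : i < (sS p r a (hrtf.2 a)).length := by rwa [List.length_map] at h1
  have hmem : (sS p r a (hrtf.2 a))[i] ∈ spine p r a (hrtf.2 a) :=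
    (mem_sS_iff _ _ _ _).mp (List.getElem_mem _)
  calc (List.map (joyalInv p r a (hrtf.2 a)) (sS p r a (hrtf.2 a)))[i]
      = joyalInv p r a (hrtf.2 a) ((sS p r a (hrtf.2 a))[i]'h1') := List.getElem_map _
    _ = (spine p r a (hrtf.2 a))[(sS p r a (hrtf.2 a)).idxOf ((sS p r a (hrtf.2 a))[i]'h1')]'_
        := joyalInv_of_mem _ _ _ _ hrtf.1 hmem
    _ = (spine p r a (hrtf.2 a))[i]'h2 :=
        getElem_idx_congr (List.Nodup.idxOf_getElem (sS_nodup p r a (hrtf.2 a)) _ _) _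

lemma joyal_root_eq : joyalRoot (joyalInv p r a (hrtf.2 a)) = r := by
  rw [joyalRoot, getLast_congr (joyal_sL hrtf), spine_getLast]

lemma joyal_a_eq : joyalA (joyalInv p r a (hrtf.2 a)) = a := by
  rw [joyalA, head_congr (joyal_sL hrtf), spine_head]

lemma joyal_p_eq : joyalP (joyalInv p r a (hrtf.2 a)) = p := by
  have hMnodup : (spine p r a (hrtf.2 a)).Nodup := spine_nodup _ _ _ _ hrtf.1
  have hlen := spine_length p r a (hrtf.2 a)
  funext x
  by_cases hx : x ∈ spine p r a (hrtf.2 a)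
  · have hper : IsPer (joyalInv p r a (hrtf.2 a)) x := joyalInv_isPer_of_mem hrtf hx
    rw [joyalP_of_per hper, joyal_sL hrtf]
    obtain ⟨i, hi, rfl⟩ := List.getElem_of_mem hx
    rcases lt_or_ge (i + 1) (spine p r a (hrtf.2 a)).length with h2 | h2
    · calc nxt (spine p r a (hrtf.2 a)) ((spine p r a (hrtf.2 a))[i])
          = (spine p r a (hrtf.2 a))[i + 1] := nxt_getElem hMnodup h2 hi
        _ = p^[i + 1] a := spine_getElem _ _ _ _ h2
        _ = p (p^[i] a) := Function.iterate_succ_apply' p i a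
        _ = p ((spine p r a (hrtf.2 a))[i]) := by rw [spine_getElem _ _ _ _ hi]
    · have hxr : (spine p r a (hrtf.2 a))[i]'hi = r := by
        have h3 : i = sd p r a (hrtf.2 a) := by omega
        calc (spine p r a (hrtf.2 a))[i]'hi = p^[i] a := spine_getElem _ _ _ _ hi
          _ = r := by rw [h3]; exact Nat.find_spec (hrtf.2 a)
      rw [hxr]
      calc nxt (spine p r a (hrtf.2 a)) r
          = nxt (spine p r a (hrtf.2 a)) ((spine p r a (hrtf.2 a)).getLast
              (spine_ne_nil _ _ _ _)) := by rw [spine_getLast]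
        _ = (spine p r a (hrtf.2 a)).getLast (spine_ne_nil _ _ _ _) := nxt_getLast hMnodup _
        _ = r := spine_getLast _ _ _ _
        _ = p r := hrtf.1.symm
  · have hnper : ¬ IsPer (joyalInv p r a (hrtf.2 a)) x := joyalInv_not_isPer_of_not_mem hrtf hx
    rw [joyalP_of_not_per hnper, joyalInv_of_not_mem _ _ _ _ hx]

end RightInv

/-- The Joyal bijection. -/
noncomputable def joyalEquiv : (V → V) ≃ ({q : (V → V) × V // IsRTF q.1 q.2} × V) where
  toFun f := (⟨(joyalP f, joyalRoot f), isRTF_joyal f⟩, joyalA f)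
  invFun x := joyalInv x.1.1.1 x.1.1.2 x.2 (x.1.2.2 x.2)
  left_inv f := joyal_left_inv f
  right_inv := by
    rintro ⟨⟨⟨p, r⟩, hrtf⟩, a⟩
    refine Prod.ext (Subtype.ext (Prod.ext ?_ ?_)) ?_
    · exact joyal_p_eq hrtf
    · exact joyal_root_eq hrtf
    · exact joyal_a_eq hrtf

end LO

/-! ### From rooted-tree functions to trees -/

open SimpleGraph

section Graph

variable (f : V → V) (r : V)

/-- The graph associated to a parent function: each non-root `x` is joined to `f x`. -/
def treeGraph : SimpleGraph V where
  Adj x y := x ≠ y ∧ ((y = f x ∧ x ≠ r) ∨ (x = f y ∧ y ≠ r))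
  symm := ⟨by
    rintro x y ⟨hne, h | h⟩
    exacts [⟨hne.symm, Or.inr h⟩, ⟨hne.symm, Or.inl h⟩]⟩
  loopless := ⟨fun x h => h.1 rfl⟩

variable {f r}

lemma rtf_fix_ne (hf : IsRTF f r) {x : V} (hx : x ≠ r) : f x ≠ x := by
  intro hfx
  obtain ⟨k, hk⟩ := hf.2 x
  exact hx (by rw [← hk, Function.iterate_fixed hfx k])

lemma rtf_not_isPer (hf : IsRTF f r) {x : V} (hx : x ≠ r) : ¬ IsPer f x := fun hper => by
  obtain ⟨k, hk⟩ := hf.2 x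
  exact hx (isPer_eq_of_reaches hper hk hf.1)

lemma treeGraph_adj_parent (hf : IsRTF f r) {x : V} (hx : x ≠ r) :
    (treeGraph f r).Adj x (f x) :=
  ⟨(rtf_fix_ne hf hx).symm, Or.inl ⟨rfl, hx⟩⟩

lemma treeGraph_reach (hf : IsRTF f r) (v : V) : (treeGraph f r).Reachable v r := by
  obtain ⟨k, hk⟩ := hf.2 v
  induction k generalizing v with
  | zero =>
    rw [Function.iterate_zero_apply] at hk
    exact hk ▸ Reachable.refl v
  | succ k ih =>
    by_cases hv : v = r
    · exact hv ▸ Reachable.refl v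
    · exact ((treeGraph_adj_parent hf hv).reachable).trans
        (ih (f v) (by rwa [Function.iterate_succ_apply] at hk))

lemma treeGraph_connected [Nonempty V] (hf : IsRTF f r) : (treeGraph f r).Connected := by
  rw [connected_iff]
  exact ⟨fun u v => (treeGraph_reach hf u).trans (treeGraph_reach hf v).symm, inferInstance⟩

lemma treeGraph_isBridge (hf : IsRTF f r) {x : V} (hx : x ≠ r) :
    (treeGraph f r).IsBridge s(x, f x) := by
  rw [isBridge_iff_forall_walk_mem_edges]
  refine fun p => ?_
  have hxS : x ∈ {v : V | ∃ k, f^[k] v = x} := ⟨0, rfl⟩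
  have hfxS : f x ∉ {v : V | ∃ k, f^[k] v = x} := by
    rintro ⟨k, hk⟩
    exact rtf_not_isPer hf hx ⟨k + 1, Nat.succ_pos _, by rwa [Function.iterate_succ_apply]⟩
  obtain ⟨d, hd, hdf, hds⟩ := p.exists_boundary_dart _ hxS hfxS
  have hedge : d.edge ∈ p.edges := List.mem_map_of_mem hd
  rcases d.adj.2 with ⟨h1, h2⟩ | ⟨h1, h2⟩
  · obtain ⟨k, hk⟩ := hdf
    cases k with
    | zero =>
      rw [Function.iterate_zero_apply] at hk
      have hprod : d.toProd = (x, f x) := Prod.ext hk (by rw [h1, hk])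
      have : d.edge = s(x, f x) := by rw [Dart.edge, hprod]
      rwa [this] at hedge
    | succ k =>
      exact absurd (show d.snd ∈ {v : V | ∃ k, f^[k] v = x} from
        ⟨k, by rw [h1]; rwa [Function.iterate_succ_apply] at hk⟩) hds
  · exact absurd (show d.snd ∈ {v : V | ∃ k, f^[k] v = x} from by
      obtain ⟨k, hk⟩ := hdf
      exact ⟨k + 1, by rw [Function.iterate_succ_apply, ← h1]; exact hk⟩) hds

lemma treeGraph_isAcyclic (hf : IsRTF f r) : (treeGraph f r).IsAcyclic := by
  rw [isAcyclic_iff_forall_adj_isBridge]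
  intro v w h
  rcases h.2 with ⟨h1, h2⟩ | ⟨h1, h2⟩
  · subst h1; exact treeGraph_isBridge hf h2
  · subst h1
    rw [Sym2.eq_swap]
    exact treeGraph_isBridge hf h2

lemma treeGraph_isTree [Nonempty V] (hf : IsRTF f r) : (treeGraph f r).IsTree :=
  ⟨treeGraph_connected hf, treeGraph_isAcyclic hf⟩

end Graph

/-! ### From trees to rooted-tree functions -/

section Parent

variable {G : SimpleGraph V}

/-- The parent function of a tree rooted at `r`: follow the unique path towards `r`. -/
noncomputable def parent (hG : G.IsTree) (r : V) : V → V :=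
  fun v => ((hG.existsUnique_path v r).choose).getVert 1

lemma parent_root (hG : G.IsTree) (r : V) : parent hG r r = r := by
  have h : ((hG.existsUnique_path r r).choose).IsPath := (hG.existsUnique_path r r).choose_spec.1
  rw [Walk.isPath_iff_eq_nil] at h
  rw [parent, h]
  rfl

lemma choose_not_nil (hG : G.IsTree) {r v : V} (hv : v ≠ r) :
    ¬ ((hG.existsUnique_path v r).choose).Nil :=
  Walk.not_nil_of_ne hv

lemma adj_parent (hG : G.IsTree) {r v : V} (hv : v ≠ r) : G.Adj v (parent hG r v) := by
  have hlen : 0 < ((hG.existsUnique_path v r).choose).length :=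
    Walk.not_nil_iff_lt_length.mp (choose_not_nil hG hv)
  have := ((hG.existsUnique_path v r).choose).adj_getVert_succ hlen
  rwa [Walk.getVert_zero] at this

lemma choose_parent_eq_tail (hG : G.IsTree) {r v : V} (hv : v ≠ r) :
    (hG.existsUnique_path (parent hG r v) r).choose
      = ((hG.existsUnique_path v r).choose).tail :=
  (((hG.existsUnique_path (parent hG r v) r).choose_spec.2 _
    (((hG.existsUnique_path v r).choose_spec.1).tail))).symm

lemma parent_length_lt (hG : G.IsTree) {r v : V} (hv : v ≠ r) :
    ((hG.existsUnique_path (parent hG r v) r).choose).length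
      < ((hG.existsUnique_path v r).choose).length := by
  rw [choose_parent_eq_tail hG hv]
  have := Walk.length_tail_add_one (choose_not_nil hG hv)
  exact Nat.lt_of_lt_of_eq (Nat.lt_succ_self _) this

lemma parent_reaches (hG : G.IsTree) (r : V) (v : V) :
    ∃ k, (parent hG r)^[k] v = r := by
  generalize hlen : ((hG.existsUnique_path v r).choose).length = L
  induction L using Nat.strong_induction_on generalizing v with
  | _ L ih =>
    by_cases hv : v = r
    · exact ⟨0, hv⟩
    · obtain ⟨k, hk⟩ := ih _ (hlen ▸ parent_length_lt hG hv) (parent hG r v) rfl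
      exact ⟨k + 1, by rwa [Function.iterate_succ_apply]⟩

lemma parent_isRTF (hG : G.IsTree) (r : V) : IsRTF (parent hG r) r :=
  ⟨parent_root hG r, parent_reaches hG r⟩

/-! #### `parent` is a left inverse of `treeGraph` -/

/-- The walk from `v` to the root along the orbit of the parent function. -/
noncomputable def orbitWalk {f : V → V} {r : V} (hf : IsRTF f r) :
    ∀ (k : ℕ) (v : V), f^[k] v = r → (treeGraph f r).Walk v r
  | 0, _, h => Walk.nil.copy (Eq.symm h) rfl
  | (k+1), v, h =>
    if hv : v = r then Walk.nil.copy hv.symm rfl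
    else Walk.cons (treeGraph_adj_parent hf hv)
      (orbitWalk hf k (f v) (by rwa [Function.iterate_succ_apply] at h))

lemma orbitWalk_support {f : V → V} {r : V} (hf : IsRTF f r) :
    ∀ (k : ℕ) (v : V) (h : f^[k] v = r) (x : V),
      x ∈ (orbitWalk hf k v h).support → ∃ j, f^[j] v = x := by
  intro k
  induction k with
  | zero =>
    intro v h x hx
    rw [orbitWalk, Walk.support_copy, Walk.support_nil] at hx
    simp only [List.mem_singleton] at hx
    exact ⟨0, by rw [hx]; exact h⟩
  | succ k ih =>
    intro v h x hx
    rw [orbitWalk] at hx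
    split_ifs at hx with hv
    · rw [Walk.support_copy, Walk.support_nil] at hx
      simp only [List.mem_singleton] at hx
      exact ⟨0, by rw [hx, ← hv]; simp⟩
    · rw [Walk.support_cons] at hx
      rcases List.mem_cons.mp hx with rfl | hx
      · exact ⟨0, rfl⟩
      · obtain ⟨j, hj⟩ := ih (f v) _ x hx
        exact ⟨j + 1, by rwa [Function.iterate_succ_apply]⟩

lemma orbitWalk_isPath {f : V → V} {r : V} (hf : IsRTF f r) :
    ∀ (k : ℕ) (v : V) (h : f^[k] v = r), (orbitWalk hf k v h).IsPath := by
  intro k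
  induction k with
  | zero => intro v h; rw [orbitWalk]; simp
  | succ k ih =>
    intro v h
    rw [orbitWalk]
    split_ifs with hv
    · simp
    · rw [Walk.cons_isPath_iff]
      refine ⟨ih _ _, fun hc => ?_⟩
      obtain ⟨j, hj⟩ := orbitWalk_support hf _ _ _ v hc
      exact rtf_not_isPer hf hv ⟨j + 1, Nat.succ_pos _, by rwa [Function.iterate_succ_apply]⟩

lemma orbitWalk_getVert_one {f : V → V} {r : V} (hf : IsRTF f r) (k : ℕ) (v : V)
    (h : f^[k] v = r) (hv : v ≠ r) : (orbitWalk hf k v h).getVert 1 = f v := by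
  cases k with
  | zero => exact absurd h hv
  | succ k =>
    rw [orbitWalk, dif_neg hv]
    rw [Walk.getVert_cons_succ, Walk.getVert_zero]

lemma parent_treeGraph [Nonempty V] {f : V → V} {r : V} (hf : IsRTF f r) :
    parent (treeGraph_isTree hf) r = f := by
  funext v
  by_cases hv : v = r
  · rw [hv, parent_root, hf.1]
  · obtain ⟨k, hk⟩ := hf.2 v
    have huniq := ((treeGraph_isTree hf).existsUnique_path v r).choose_spec.2
      (orbitWalk hf k v hk) (orbitWalk_isPath hf k v hk)
    rw [parent, ← huniq, orbitWalk_getVert_one hf k v hk hv]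

/-! #### `treeGraph` is a left inverse of `parent` -/

lemma tree_edgeSet_ncard (hG : G.IsTree) : G.edgeSet.ncard + 1 = Fintype.card V := by
  classical
  rw [Set.ncard_eq_toFinset_card']
  have := hG.card_edgeFinset
  rwa [SimpleGraph.edgeFinset] at this

lemma treeGraph_parent [Nonempty V] (hG : G.IsTree) (r : V) :
    treeGraph (parent hG r) r = G := by
  have hle : treeGraph (parent hG r) r ≤ G := by
    rintro x y ⟨hne, ⟨h1, h2⟩ | ⟨h1, h2⟩⟩
    · exact h1 ▸ adj_parent hG h2
    · exact (h1 ▸ adj_parent hG h2).symm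
  have hsub : (treeGraph (parent hG r) r).edgeSet ⊆ G.edgeSet := edgeSet_mono hle
  have hcard : G.edgeSet.ncard ≤ (treeGraph (parent hG r) r).edgeSet.ncard := by
    have h1 := tree_edgeSet_ncard (treeGraph_isTree (parent_isRTF hG r))
    have h2 := tree_edgeSet_ncard hG
    omega
  rw [← edgeSet_inj]
  exact Set.eq_of_subset_of_ncard_le hsub hcard (Set.toFinite _)

/-- The equivalence between rooted-tree functions and rooted trees. -/
noncomputable def rtfEquiv [Nonempty V] :
    {q : (V → V) × V // IsRTF q.1 q.2} ≃ ({G : SimpleGraph V // G.IsTree} × V) where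
  toFun q := (⟨treeGraph q.1.1 q.1.2, treeGraph_isTree q.2⟩, q.1.2)
  invFun x := ⟨(parent x.1.2 x.2, x.2), parent_isRTF x.1.2 x.2⟩
  left_inv := by
    rintro ⟨⟨f, r⟩, hf⟩
    exact Subtype.ext (Prod.ext (parent_treeGraph hf) rfl)
  right_inv := by
    rintro ⟨⟨G, hG⟩, r⟩
    exact Prod.ext (Subtype.ext (treeGraph_parent hG r)) rfl

end Parent

end Cayley

/-- Cayley's formula: the number of labeled trees on `n ≥ 1` vertices
is `n^(n−2)` (with natural subtraction, so the count is `1` for `n = 1, 2`). -/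
theorem cayley_formula (n : ℕ) (hn : 1 ≤ n) :
    ({G : SimpleGraph (Fin n) | G.IsTree} : Set (SimpleGraph (Fin n))).ncard
      = n ^ (n - 2) := by
  have hne : Nonempty (Fin n) := Fin.pos_iff_nonempty.mp hn
  have h1 : Nat.card (Fin n → Fin n) = n ^ n := by
    rw [Nat.card_eq_fintype_card, Fintype.card_fun, Fintype.card_fin]
  have h2 := Nat.card_congr (Cayley.joyalEquiv (V := Fin n))
  have h3 := Nat.card_congr (Cayley.rtfEquiv (V := Fin n))
  rw [Nat.card_prod, Nat.card_eq_fintype_card (α := Fin n), Fintype.card_fin] at h2 h3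
  set T := Nat.card {G : SimpleGraph (Fin n) // G.IsTree} with hT
  have hset : ({G : SimpleGraph (Fin n) | G.IsTree} : Set (SimpleGraph (Fin n))).ncard = T := by
    rw [hT, ← Nat.card_coe_set_eq]
    exact Nat.card_congr (Equiv.subtypeEquivRight fun x => Iff.rfl).symm
  rw [hset]
  have key : T * (n * n) = n ^ n := by
    rw [← h1, h2, h3]
    ring
  rcases Nat.lt_or_ge n 2 with hsmall | hbig
  · interval_cases n
    · simpa using key
  · have hpow : n ^ (n - 2) * (n * n) = n ^ n := by
      rw [show n * n = n ^ 2 by ring, ← pow_add]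
      congr 1
      omega
    have := key.trans hpow.symm
    exact Nat.eq_of_mul_eq_mul_right (by positivity) this
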